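/- Let H be a locally compact Hausdorff group with left Haar measure β acting continuously and properly on the right on a locally compact Hausdorff space X, with orbit map q : X → X/H, and let ν be a positive Radon measure on the (locally compact Hausdorff) orbit space X/H. For f ∈ C_c(X × H), the function x ↦ ∫_H ∫_H f(x·η, h) dβ(h) dβ(η) is H-invariant and hence descends to a function on X/H; define I(f) = ∫_{X/H} of this descended function dν. Then I is invariant under the inversion of the transformation groupoid: I(f ∘ inv) = I(f) for all f ∈ C_c(X × H), where inv(x, h) = (x·h, h⁻¹). -/

import Mathlib

open MeasureTheory MulOpposite Pointwise

/-- for a continuous proper right action of a locally compact Hausdorff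
group `H` (left Haar measure `β`) on a locally compact Hausdorff space `X`, and a
positive Radon measure `ν` on `X/H`, the functional
`I(f) = ∫_{X/H} [x ↦ ∫_H ∫_H f(x·η, h) dβ(h) dβ(η)] dν` on `C_c(X × H)` is invariant
under the inversion `inv(x,h) = (x·h, h⁻¹)` of the transformation groupoid. -/
theorem transverse_functional_inversion_invariant
    {H X : Type*}
    [Group H] [TopologicalSpace H] [IsTopologicalGroup H]
    [LocallyCompactSpace H] [T2Space H] [MeasurableSpace H] [BorelSpace H]
    [TopologicalSpace X] [LocallyCompactSpace X] [T2Space X]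
    [MulAction Hᵐᵒᵖ X] [ContinuousSMul Hᵐᵒᵖ X]
    [MeasurableSpace (Quotient (MulAction.orbitRel Hᵐᵒᵖ X))]
    [BorelSpace (Quotient (MulAction.orbitRel Hᵐᵒᵖ X))]
    (β : Measure H) [β.IsHaarMeasure]
    (hproper : IsProperMap (fun p : X × H => (p.1, op p.2 • p.1)))
    (ν : Measure (Quotient (MulAction.orbitRel Hᵐᵒᵖ X))) [ν.Regular] :
    ∀ f : X × H → ℂ, Continuous f → HasCompactSupport f →
      ∀ g g' : Quotient (MulAction.orbitRel Hᵐᵒᵖ X) → ℂ,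
        (∀ x : X, g (Quotient.mk (MulAction.orbitRel Hᵐᵒᵖ X) x)
            = ∫ η, (∫ h, f (op η • x, h) ∂β) ∂β) →
        (∀ x : X, g' (Quotient.mk (MulAction.orbitRel Hᵐᵒᵖ X) x)
            = ∫ η, (∫ h, f (op h • (op η • x), h⁻¹) ∂β) ∂β) →
        ∫ ω, g' ω ∂ν = ∫ ω, g ω ∂ν := by
  intro f hf hfc g g' hg hg'
  have key : ∀ x : X, (∫ η, (∫ h, f (op h • (op η • x), h⁻¹) ∂β) ∂β)
      = ∫ η, (∫ h, f (op η • x, h) ∂β) ∂β := by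
    intro x
    -- Step 1: substitute h ↦ η h in the inner integral (left invariance of Haar measure)
    have step1 : ∀ η : H, (∫ h, f (op h • (op η • x), h⁻¹) ∂β)
        = ∫ h, f (op h • x, h⁻¹ * η) ∂β := by
      intro η
      have inv := MeasureTheory.integral_mul_left_eq_self (μ := β)
        (f := fun h => f (op h • x, h⁻¹ * η)) η
      rw [← inv]
      congr 1 with h
      have h1 : op h • (op η • x) = op (η * h) • x := by
        rw [smul_smul, ← op_mul]
      have h2 : (η * h)⁻¹ * η = h⁻¹ := by
        rw [mul_inv_rev, mul_assoc, inv_mul_cancel, mul_one]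
      rw [h1, ← h2]
    -- compact support data for the Fubini swap
    set K := tsupport f with hK
    have hKc : IsCompact K := hfc
    have hKXc : IsCompact (Prod.fst '' K) := hKc.image continuous_fst
    have hKHc : IsCompact (Prod.snd '' K) := hKc.image continuous_snd
    set C := Prod.snd '' ((fun p : X × H => (p.1, op p.2 • p.1)) ⁻¹' ({x} ×ˢ (Prod.fst '' K)))
      with hC
    have hCc : IsCompact C :=
      (hproper.isCompact_preimage (isCompact_singleton.prod hKXc)).image continuous_snd
    have hmemC : ∀ h : H, op h • x ∈ Prod.fst '' K → h ∈ C := by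
      intro h hh
      exact ⟨(x, h), ⟨rfl, hh⟩, rfl⟩
    -- Step 2: Fubini for the function (η, h) ↦ f (op h • x, h⁻¹ * η)
    have cont : Continuous (Function.uncurry fun (η h : H) => f (op h • x, h⁻¹ * η)) := by
      apply hf.comp
      exact (continuous_smul.comp
        ((continuous_op.comp (continuous_snd)).prodMk continuous_const)).prodMk
        (((continuous_snd.inv)).mul continuous_fst)
    have supp : HasCompactSupport (Function.uncurry fun (η h : H) => f (op h • x, h⁻¹ * η)) := by
      apply HasCompactSupport.intro ((hCc.mul hKHc).prod hCc)
      rintro ⟨η, h⟩ hnot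
      by_contra hne
      have hmem : (op h • x, h⁻¹ * η) ∈ K :=
        subset_tsupport f (by simpa using hne)
      have hhC : h ∈ C := hmemC h ⟨_, hmem, rfl⟩
      have hη : η ∈ C * (Prod.snd '' K) := by
        have := Set.mul_mem_mul hhC (Set.mem_image_of_mem Prod.snd hmem)
        simpa [mul_inv_cancel_left] using this
      exact hnot ⟨hη, hhC⟩
    calc ∫ η, (∫ h, f (op h • (op η • x), h⁻¹) ∂β) ∂β
        = ∫ η, (∫ h, f (op h • x, h⁻¹ * η) ∂β) ∂β := by
          exact integral_congr_ae (Filter.Eventually.of_forall step1)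
      _ = ∫ h, (∫ η, f (op h • x, h⁻¹ * η) ∂β) ∂β :=
          integral_integral_swap_of_hasCompactSupport cont supp
      _ = ∫ h, (∫ η, f (op h • x, η) ∂β) ∂β := by
          refine integral_congr_ae (Filter.Eventually.of_forall fun h => ?_)
          exact MeasureTheory.integral_mul_left_eq_self (μ := β)
            (f := fun η => f (op h • x, η)) h⁻¹
      _ = ∫ η, (∫ h, f (op η • x, h) ∂β) ∂β := rfl
  have hgg : g' = g := by
    funext ω
    obtain ⟨x, rfl⟩ := Quotient.exists_rep ω
    exact (hg' x).trans ((key x).trans (hg x).symm)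
  rw [hgg]
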